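/- For every standard Young-Fibonacci tableau t of size n, the word max(t), obtained by reading the top row of t from left to right followed by the bottom row of t from right to left, is a permutation of {1,…,n} with P(max(t)) = t, and it is the lexicographically greatest permutation whose Young-Fibonacci insertion tableau is t. -/

import Mathlib

/-- A snakeshape: a composition all of whose parts equal 1 or 2, recorded as the
list of column heights, read left to right. -/
def IsSnakeshape (u : List ℕ) : Prop := ∀ p ∈ u, p = 1 ∨ p = 2

/-- The shape (list of column heights, left to right) of a tableau given as a
list of columns, each column listed top to bottom. -/
def shapeOf (t : List (List ℕ)) : List ℕ := t.map List.length

/-- `t` is a standard Young–Fibonacci tableau of size `n`: columns are listed left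
to right, each column top to bottom; every column has height 1 or 2; in each
column the top entry exceeds the bottom entry; every topmost entry exceeds all
entries in columns strictly to its right; and the entries are exactly `1,…,n`. -/
def IsYFT (n : ℕ) (t : List (List ℕ)) : Prop :=
  (∀ c ∈ t, c.length = 1 ∨ c.length = 2) ∧
  (∀ c ∈ t, List.Chain' (fun a b => b < a) c) ∧
  (∀ i j : ℕ, i < j → j < t.length →
    ∀ a ∈ (t.getD i []).head?, ∀ x ∈ t.getD j [], x < a) ∧
  (t.flatten).Perm (List.range' 1 n)

/-- Auxiliary, fuelled version of the Young–Fibonacci insertion: reading the word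
from right to left, each letter read gets matched to the largest not-yet-matched
letter occurring strictly to its left which exceeds it (forming a height-2 column,
larger letter on top), and otherwise stays single (a height-1 column); columns are
listed in the order in which their status was settled. -/
def insertColsAux : ℕ → List ℕ → List (List ℕ)
  | 0, _ => []
  | _, [] => []
  | fuel+1, w =>
    let x := w.getLast!
    let w' := w.dropLast
    match (w'.filter (fun y => decide (x < y))).max? with
    | none => [x] :: insertColsAux fuel w'
    | some m => [m, x] :: insertColsAux fuel (w'.erase m)

/-- The Young–Fibonacci insertion tableau of a word. -/
def insertCols (w : List ℕ) : List (List ℕ) := insertColsAux w.length w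

/-- The word `σ(1)⋯σ(n)` of a permutation of `{1,…,n}` (letters `1,…,n`). -/
def permWord {n : ℕ} (σ : Equiv.Perm (Fin n)) : List ℕ :=
  List.ofFn (fun i => (σ i : ℕ) + 1)

/-- min(t): read the columns right to left, each column top to bottom. -/
def minWord (t : List (List ℕ)) : List ℕ := t.reverse.flatten

/-- max(t): the top row left to right, then the bottom row right to left. -/
def maxWord (t : List (List ℕ)) : List ℕ :=
  (t.filterMap fun c => if c.length = 2 then c.head? else none) ++
    (t.filterMap List.getLast?).reverse

/-- Number of inversions of a word: pairs of positions `p < q` with `w p > w q`. -/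
def invCount (w : List ℕ) : ℕ :=
  ((Finset.range w.length ×ˢ Finset.range w.length).filter
    (fun p => p.1 < p.2 ∧ w.getD p.2 0 < w.getD p.1 0)).card

/-- `w'` is obtained from `w` by swapping two adjacent letters `x < y` (in this
order in `w`), thus creating exactly one more inversion. -/
def AdjSwap (w w' : List ℕ) : Prop :=
  ∃ l r : List ℕ, ∃ x y : ℕ, x < y ∧ w = l ++ x :: y :: r ∧ w' = l ++ y :: x :: r

/-- The (right) weak order on words. -/
def WordWeakLe (w w' : List ℕ) : Prop := Relation.ReflTransGen AdjSwap w w'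

/-- `Shift t t'`: `t'` is obtained from `t` by shifting one entry. Columns are
listed top to bottom, so `[b, a]` is the column with top `b`, bottom `a`. -/
inductive Shift : List (List ℕ) → List (List ℕ) → Prop
  /-- the bottom entry `a` of a height-2 column bumps up the single entry `c` of
  the column on its left; the top entry `b` falls down. -/
  | bump2 (l r : List (List ℕ)) (c b a : ℕ) :
      Shift (l ++ [[c], [b, a]] ++ r) (l ++ [[c, a], [b]] ++ r)
  /-- the entry `a` of a height-1 column bumps up the single entry `c` of the
  column on its left; its own column disappears. -/
  | bump1 (l r : List (List ℕ)) (c a : ℕ) :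
      Shift (l ++ [[c], [a]] ++ r) (l ++ [[c, a]] ++ r)
  /-- `a < c` replaces `c` at the bottom of the height-2 column on its left, and
  `c < b` takes the former place of `a`. -/
  | exch (l r : List (List ℕ)) (d c b a : ℕ) (h1 : a < c) (h2 : c < b) :
      Shift (l ++ [[d, c], [b, a]] ++ r) (l ++ [[d, a], [b, c]] ++ r)
  /-- `a < c` replaces `c` at the bottom of the height-2 column on its left; since
  `b < c`, `c` becomes a new height-1 column in between and `b` falls down. -/
  | split2 (l r : List (List ℕ)) (d c b a : ℕ) (h1 : a < c) (h2 : b < c) :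
      Shift (l ++ [[d, c], [b, a]] ++ r) (l ++ [[d, a], [c], [b]] ++ r)
  /-- `a < c` replaces `c` at the bottom of the height-2 column on its left; `c`
  becomes a new height-1 column and the height-1 column of `a` disappears. -/
  | split1 (l r : List (List ℕ)) (d c a : ℕ) (h1 : a < c) :
      Shift (l ++ [[d, c], [a]] ++ r) (l ++ [[d, a], [c]] ++ r)

/-- The bottom row of a tableau, read left to right: the bottom entries of the
height-2 columns together with the entries of the height-1 columns. -/
def bottomRow (t : List (List ℕ)) : List ℕ := t.filterMap List.getLast?

/-- Generating relations of the canonical poset `P_t`: `canoGen t x y` means `x`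
is covered... i.e. `x <_P y` is a generating relation: consecutive bottom-row
entries read right to left (rightmost lowest), and each top entry of a height-2
column below the corresponding bottom entry. -/
def canoGen (t : List (List ℕ)) (x y : ℕ) : Prop :=
  (∃ i : ℕ, i + 1 < (bottomRow t).length ∧
    (bottomRow t).getD (i + 1) 0 = x ∧ (bottomRow t).getD i 0 = y) ∨
  (∃ c ∈ t, c.length = 2 ∧ c.head? = some x ∧ c.getLast? = some y)

/-- `w` is (the word of) a linear extension of the canonical poset `P_t`. -/
def IsLinExt (t : List (List ℕ)) (w : List ℕ) : Prop :=
  ∀ x y : ℕ, Relation.ReflTransGen (canoGen t) x y → x ≠ y →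
    w.idxOf x < w.idxOf y

/-- The set of inversions of a word: pairs `(j, i)` with `i < j` such that `j`
occurs before `i`. -/
def InvSet (w : List ℕ) : Set (ℕ × ℕ) :=
  {p | p.2 < p.1 ∧ p.1 ∈ w ∧ p.2 ∈ w ∧ w.idxOf p.1 < w.idxOf p.2}

/-- The set of non-inversions of a word: pairs `(i, j)` with `i < j` such that `i`
occurs before `j`. -/
def NonInvSet (w : List ℕ) : Set (ℕ × ℕ) :=
  {p | p.1 < p.2 ∧ p.1 ∈ w ∧ p.2 ∈ w ∧ w.idxOf p.1 < w.idxOf p.2}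

/-- The row canonical tableau of shape `u` (size `n`): topmost cells are labelled
`n, n-1, …` from left to right, bottom cells of height-2 columns are labelled
`1, 2, …` from left to right. -/
def rTcols (n : ℕ) (u : List ℕ) : List (List ℕ) :=
  (List.range u.length).map (fun i =>
    if u.getD i 0 = 2 then [n - i, (u.take i).count 2 + 1] else [n - i])

/-- The column canonical tableau of shape `u`: cells are labelled `1, 2, …` taking
columns right to left, in each column the bottom cell before the top cell. -/
def cTcols (u : List ℕ) : List (List ℕ) :=
  (List.range u.length).map (fun i =>
    let s := u.sum - (u.take (i + 1)).sum
    if u.getD i 0 = 2 then [s + 2, s + 1] else [s + 1])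

/-- `t` is a semistandard Young–Fibonacci tableau of shape `u`: entries are
positive integers, in each column the top entry strictly exceeds the bottom one,
and every topmost entry is `≥` all entries in columns strictly to its right. -/
def IsSSYFT (u : List ℕ) (t : List (List ℕ)) : Prop :=
  shapeOf t = u ∧
  (∀ c ∈ t, List.Chain' (fun a b => b < a) c) ∧
  (∀ i j : ℕ, i < j → j < t.length →
    ∀ a ∈ (t.getD i []).head?, ∀ x ∈ t.getD j [], x ≤ a) ∧
  (∀ x ∈ t.flatten, 1 ≤ x)

/-- `t` has content `v`: for each `i`, `t` has exactly `v_i` entries equal to `i`.-/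
def ContentIs (v : List ℕ) (t : List (List ℕ)) : Prop :=
  ∀ i : ℕ, t.flatten.count (i + 1) = v.getD i 0

/-- The Young–Fibonacci number `N_{u,v}`: the number of semistandard
Young–Fibonacci tableaux of shape `u` and content `v`. -/
noncomputable def YFNumber (u v : List ℕ) : ℕ :=
  Nat.card {t : List (List ℕ) // IsSSYFT u t ∧ ContentIs v t}

/-- The multiset (as a list indexed by positions) `v^{1-}`: delete a part equal
to 1, or decrease a larger part by 1. -/
def vMinus (v : List ℕ) : List (List ℕ) :=
  (List.range v.length).map (fun p =>
    if v.getD p 0 = 1 then v.eraseIdx p else v.set p (v.getD p 0 - 1))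

/-- The list of snakeshapes covering `u` in the Young–Fibonacci lattice:
(i) prepend a part 1; (ii) replace the leftmost part equal to 1 by a 2;
(iii) if `u` starts with `k ≥ 1` parts equal to 2, insert a part 1 just after the
`i`-th part, `1 ≤ i ≤ k`. -/
def coversList (u : List ℕ) : List (List ℕ) :=
  [1 :: u] ++
    (if (u.takeWhile (fun p => decide (p = 2))).length < u.length then
      [u.take (u.takeWhile (fun p => decide (p = 2))).length ++
        2 :: u.drop ((u.takeWhile (fun p => decide (p = 2))).length + 1)]
    else []) ++
    ((List.range (u.takeWhile (fun p => decide (p = 2))).length).map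
      (fun i => u.insertIdx (i + 1) 1))

/-- Okada's analogue of the Kostka numbers (fuelled implementation of the
defining recurrences; `v.length` is enough fuel). -/
def OkadaKAux : ℕ → List ℕ → List ℕ → ℕ
  | _, [], [] => 1
  | fuel+1, 1 :: u, 1 :: v => OkadaKAux fuel u v
  | fuel+1, 2 :: u, 2 :: v => OkadaKAux fuel u v
  | _+1, 1 :: _, 2 :: _ => 0
  | fuel+1, 2 :: u, 1 :: v => ((coversList u).map (fun w => OkadaKAux fuel w v)).sum
  | _, _, _ => 0

/-- Okada's analogue `K_{u,v}` of the Kostka numbers, determined by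
`K_{∅,∅} = 1`, `K_{1u,1v} = K_{u,v}`, `K_{2u,2v} = K_{u,v}`, `K_{1u,2v} = 0` and
`K_{2u,1v} = Σ_{w covers u} K_{w,v}`. -/
def OkadaK (u v : List ℕ) : ℕ := OkadaKAux v.length u v

/-- The cells of a snakeshape `u`: pairs `(i, r)` with `i` the (0-based) column
index and `r = 0` for the bottom cell, `r = 1` for the top cell. -/
def cellsFinset (u : List ℕ) : Finset (ℕ × ℕ) :=
  (Finset.range u.length ×ˢ Finset.range 2).filter (fun p => p.2 < u.getD p.1 0)

/-- Generating relations of the poset `P_u` on the cells of `u`: the bottom-row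
cells read right to left form a chain (rightmost lowest), and the top cell of
each height-2 column lies strictly below its bottom cell. -/
def cellGen (u : List ℕ) (c c' : ℕ × ℕ) : Prop :=
  (∃ i : ℕ, i + 1 < u.length ∧ c = (i + 1, 0) ∧ c' = (i, 0)) ∨
  (∃ i : ℕ, i < u.length ∧ u.getD i 0 = 2 ∧ c = (i, 1) ∧ c' = (i, 0))

/-- The order relation of the poset `P_u`. -/
def cellLe (u : List ℕ) (c c' : ℕ × ℕ) : Prop :=
  Relation.ReflTransGen (cellGen u) c c'
section YFaux

lemma getLast!_concat' (w : List ℕ) (x : ℕ) : (w ++ [x]).getLast! = x :=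
  List.getLast!_of_getLast? List.getLast?_concat

lemma max?_eq_some_nat {l : List ℕ} {b : ℕ} :
    l.max? = some b ↔ b ∈ l ∧ ∀ x ∈ l, x ≤ b :=
  List.max?_eq_some_iff

lemma insertColsAux_ne (f : ℕ) (w : List ℕ) (hw : w ≠ []) :
    insertColsAux (f+1) w =
      match ((w.dropLast).filter (fun y => decide (w.getLast! < y))).max? with
      | none => [w.getLast!] :: insertColsAux f (w.dropLast)
      | some m => [m, w.getLast!] :: insertColsAux f ((w.dropLast).erase m) := by
  cases w with
  | nil => exact absurd rfl hw
  | cons h tl => rfl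

lemma insertColsAux_fuel : ∀ (f g : ℕ) (w : List ℕ), w.length ≤ f → w.length ≤ g →
    insertColsAux f w = insertColsAux g w := by
  intro f
  induction f with
  | zero =>
    intro g w hf _
    have : w = [] := List.length_eq_zero_iff.mp (Nat.le_zero.mp hf)
    subst this; cases g <;> rfl
  | succ f ih =>
    intro g w hf hg
    cases w with
    | nil => cases g <;> rfl
    | cons h tl =>
      cases g with
      | zero => simp at hg
      | succ g =>
        rw [insertColsAux_ne f _ (List.cons_ne_nil h tl),
          insertColsAux_ne g _ (List.cons_ne_nil h tl)]
        have hd : ((h :: tl).dropLast).length ≤ f := by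
          simp only [List.length_dropLast, List.length_cons] at *; omega
        have hd' : ((h :: tl).dropLast).length ≤ g := by
          simp only [List.length_dropLast, List.length_cons] at *; omega
        cases hm : (((h :: tl).dropLast).filter
            (fun y => decide ((h :: tl).getLast! < y))).max? with
        | none => simp only [hm]; rw [ih g _ hd hd']
        | some m =>
          simp only [hm]
          rw [ih g _ (le_trans (List.length_erase_le) hd)
            (le_trans (List.length_erase_le) hd')]

lemma insertCols_concat (w : List ℕ) (x : ℕ) :
    insertCols (w ++ [x]) =
      match (w.filter (fun y => decide (x < y))).max? with
      | none => [x] :: insertCols w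
      | some m => [m, x] :: insertCols (w.erase m) := by
  show insertColsAux (w ++ [x]).length (w ++ [x]) = _
  have hl : (w ++ [x]).length = w.length + 1 := by simp
  rw [hl, insertColsAux_ne w.length _ (by simp), List.dropLast_concat, getLast!_concat']
  cases hm : (w.filter (fun y => decide (x < y))).max? with
  | none => simp only [hm]; rfl
  | some m =>
    simp only [hm]
    congr 1
    exact insertColsAux_fuel _ _ _ (le_trans (List.length_erase_le) le_rfl) le_rfl

/-- The generalized invariant: the structural conditions of a YFT without the
entry-set condition. -/
def GoodT (t : List (List ℕ)) : Prop :=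
  (∀ c ∈ t, c.length = 1 ∨ c.length = 2) ∧
  (∀ c ∈ t, List.Chain' (fun a b => b < a) c) ∧
  (∀ i j : ℕ, i < j → j < t.length →
    ∀ a ∈ (t.getD i []).head?, ∀ x ∈ t.getD j [], x < a)

lemma GoodT_tail {c : List ℕ} {t' : List (List ℕ)} (h : GoodT (c :: t')) : GoodT t' := by
  obtain ⟨h1, h2, h3⟩ := h
  refine ⟨fun d hd => h1 d (List.mem_cons_of_mem _ hd),
    fun d hd => h2 d (List.mem_cons_of_mem _ hd), ?_⟩
  intro i j hij hj a ha x hx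
  exact h3 (i+1) (j+1) (by omega) (by simpa using Nat.succ_lt_succ hj) a
    (by simpa using ha) x (by simpa using hx)

lemma head_gt_flatten {c : List ℕ} {t' : List (List ℕ)} (h : GoodT (c :: t'))
    {b : ℕ} (hb : c.head? = some b) : ∀ x ∈ t'.flatten, x < b := by
  intro x hx
  rw [List.mem_flatten] at hx
  obtain ⟨d, hd, hxd⟩ := hx
  obtain ⟨j, hj, rfl⟩ := List.mem_iff_getElem.mp hd
  refine h.2.2 0 (j+1) (by omega) (by simpa using Nat.succ_lt_succ hj) b ?_ x ?_
  · simpa using hb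
  · rw [List.getD_cons_succ, List.getD_eq_getElem _ _ hj]
    exact hxd

lemma maxWord_cons1 (a : ℕ) (t' : List (List ℕ)) :
    maxWord ([a] :: t') = maxWord t' ++ [a] := by
  simp [maxWord, List.filterMap_cons]

lemma maxWord_cons2 (b a : ℕ) (t' : List (List ℕ)) :
    maxWord ([b, a] :: t') = b :: (maxWord t' ++ [a]) := by
  simp [maxWord, List.filterMap_cons]

lemma lex_append {u v : List ℕ} (s : List ℕ) (hlen : u.length = v.length)
    (h : List.Lex (· < ·) u v) : List.Lex (· < ·) (u ++ s) (v ++ s) := by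
  induction u generalizing v with
  | nil =>
    cases v with
    | nil => cases h
    | cons b v' => simp at hlen
  | cons a u' ih =>
    cases v with
    | nil => simp at hlen
    | cons b v' =>
      cases h with
      | rel hr => exact List.Lex.rel hr
      | cons h' => exact List.Lex.cons (ih (by simpa using hlen) h')

lemma main_lemma : ∀ t : List (List ℕ), GoodT t →
    (maxWord t).Perm t.flatten ∧ insertCols (maxWord t) = t ∧
    ∀ w : List ℕ, w.Perm t.flatten → insertCols w = t →
      w = maxWord t ∨ List.Lex (· < ·) w (maxWord t) := by
  intro t
  induction t with
  | nil =>
    intro _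
    refine ⟨by simp [maxWord], rfl, ?_⟩
    intro w hw _
    left
    simp only [List.flatten_nil] at hw
    rw [hw.eq_nil]
    rfl
  | cons c t' ih =>
    intro hg
    have hg' := GoodT_tail hg
    obtain ⟨M'perm, M'ins, M'max⟩ := ih hg'
    have hMlen : (maxWord t').length = t'.flatten.length := M'perm.length_eq
    rcases hg.1 c (List.mem_cons_self) with h1 | h2
    · -- height-1 column
      obtain ⟨a, rfl⟩ := List.length_eq_one_iff.mp h1
      have hlt : ∀ x ∈ t'.flatten, x < a := head_gt_flatten hg rfl
      have hfl : ([a] :: t').flatten = a :: t'.flatten := by simp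
      have mw := maxWord_cons1 a t'
      have hA : (maxWord ([a] :: t')).Perm (([a] :: t').flatten) := by
        rw [mw, hfl]
        exact (List.perm_append_singleton a (maxWord t')).trans (M'perm.cons a)
      refine ⟨hA, ?_, ?_⟩
      · rw [mw, insertCols_concat]
        have hfilter : (maxWord t').filter (fun y => decide (a < y)) = [] := by
          rw [List.filter_eq_nil_iff]
          intro y hy
          simp only [decide_eq_true_eq, not_lt]
          exact le_of_lt (hlt y (M'perm.mem_iff.mp hy))
        rw [hfilter]
        simp only [List.max?_nil]
        rw [M'ins]
      · intro w hw hins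
        have hwne : w ≠ [] := by
          intro hnil
          rw [hnil, hfl] at hw
          exact absurd hw.symm.eq_nil (by simp)
        obtain ⟨u, x, rfl⟩ := List.eq_nil_or_concat w |>.resolve_left hwne
        rw [List.concat_eq_append] at *
        rw [insertCols_concat] at hins
        cases hm : (u.filter (fun y => decide (x < y))).max? with
        | some m => rw [hm] at hins; simp at hins
        | none =>
          rw [hm] at hins
          injection hins with hxa hins'
          injection hxa with hxa _
          rw [hxa] at hw ⊢
          have hu : u.Perm t'.flatten := by
            have hp : (a :: u).Perm (a :: t'.flatten) := by
              refine List.Perm.trans ?_ (hw.trans (by rw [hfl]))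
              exact (List.perm_append_singleton a u).symm
            exact hp.cons_inv
          rcases M'max u hu hins' with rfl | hlex
          · left; rw [mw]
          · right; rw [mw]
            exact lex_append [a] (hu.length_eq.trans hMlen.symm) hlex
    · -- height-2 column
      obtain ⟨b, a, rfl⟩ := List.length_eq_two.mp h2
      have hab : a < b := by
        have := hg.2.1 [b, a] (List.mem_cons_self)
        simpa [List.Chain', List.isChain_cons_cons] using this
      have hlt : ∀ x ∈ t'.flatten, x < b := head_gt_flatten hg rfl
      have hfl : ([b, a] :: t').flatten = b :: a :: t'.flatten := by simp
      have mw := maxWord_cons2 b a t'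
      have hA : (maxWord ([b, a] :: t')).Perm (([b, a] :: t').flatten) := by
        rw [mw, hfl]
        exact (((List.perm_append_singleton a (maxWord t')).trans (M'perm.cons a)).cons b)
      refine ⟨hA, ?_, ?_⟩
      · rw [mw, show b :: (maxWord t' ++ [a]) = (b :: maxWord t') ++ [a] by rfl,
          insertCols_concat]
        have hmax : ((b :: maxWord t').filter (fun y => decide (a < y))).max? = some b := by
          rw [max?_eq_some_nat]
          constructor
          · rw [List.mem_filter]
            exact ⟨List.mem_cons_self, by simpa using hab⟩
          · intro y hy
            have hy' := List.mem_of_mem_filter hy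
            rcases List.mem_cons.mp hy' with rfl | hy''
            · exact le_rfl
            · exact le_of_lt (hlt y (M'perm.mem_iff.mp hy''))
        rw [hmax]
        show [b, a] :: insertCols ((b :: maxWord t').erase b) = [b, a] :: t'
        rw [List.erase_cons_head, M'ins]
      · intro w hw hins
        have hwne : w ≠ [] := by
          intro hnil
          rw [hnil, hfl] at hw
          exact absurd hw.symm.eq_nil (by simp)
        obtain ⟨u, x, rfl⟩ := List.eq_nil_or_concat w |>.resolve_left hwne
        rw [List.concat_eq_append] at *
        rw [insertCols_concat] at hins
        cases hm : (u.filter (fun y => decide (x < y))).max? with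
        | none => rw [hm] at hins; simp at hins
        | some m =>
          rw [hm] at hins
          injection hins with h1 hins'
          injection h1 with hmb h1'
          injection h1' with hxa _
          rw [hmb] at hm hins'
          rw [hxa] at hw hm ⊢
          have hmemb : b ∈ u := List.mem_of_mem_filter (max?_eq_some_nat.mp hm).1
          have hu : u.Perm (b :: t'.flatten) := by
            have h1 : (a :: u).Perm (b :: a :: t'.flatten) :=
              ((List.perm_append_singleton a u).symm).trans (hw.trans (by rw [hfl]))
            have h2 : (a :: u).Perm (a :: b :: t'.flatten) :=
              h1.trans (List.Perm.swap a b t'.flatten)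
            exact h2.cons_inv
          have huer : (u.erase b).Perm t'.flatten := by
            have := hu.erase b
            rwa [List.erase_cons_head] at this
          cases u with
          | nil => simp at hmemb
          | cons h v =>
            by_cases hhb : h = b
            · subst hhb
              rw [List.erase_cons_head] at hins' huer
              rcases M'max v huer hins' with rfl | hlex
              · left; rw [mw]; rfl
              · right; rw [mw]
                exact List.Lex.cons (lex_append [a] (huer.length_eq.trans hMlen.symm) hlex)
            · right; rw [mw]
              have hh : h < b := by
                have hhmem : h ∈ b :: t'.flatten := hu.mem_iff.mp (List.mem_cons_self)
                rcases List.mem_cons.mp hhmem with rfl | hh'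
                · exact absurd rfl hhb
                · exact hlt h hh'
              exact List.Lex.rel hh

end YFaux

/-- `max(t)` (top row left to right, then bottom row right to left)
is a permutation of `{1,…,n}`, its insertion tableau is `t`, and it is
lexicographically greatest among the permutations inserting to `t`. -/
theorem maxWord_is_lex_greatest_in_class (n : ℕ) (t : List (List ℕ))
    (ht : IsYFT n t) :
    (maxWord t).Perm (List.range' 1 n) ∧
    insertCols (maxWord t) = t ∧
    ∀ w : List ℕ, w.Perm (List.range' 1 n) → insertCols w = t →
      w = maxWord t ∨ List.Lex (· < ·) w (maxWord t) := by
  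
  obtain ⟨hA, hB, hC⟩ := main_lemma t ⟨ht.1, ht.2.1, ht.2.2.1⟩
  have hperm := ht.2.2.2
  exact ⟨hA.trans hperm, hB, fun w hw hi => hC w (hw.trans hperm.symm) hi⟩
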